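/- Let v: ℝ → (0,∞) be even, nondecreasing, submultiplicative, and satisfy Σ_{l∈ℤ} v(l)^{-2} < ∞. Let f: ℝ → ℂ be continuous with ‖f‖_{W} := (Σ_{l∈ℤ} sup_{x∈[0,1]} |f(x+l)|² v(l)²)^{1/2} < ∞. Then for every p ≥ 1, ( ∫_{-p/2}^{p/2} |Σ_{l≠0} f(x + pl)|² dx )^{1/2} ≤ v(1) · Φ_v(p) · ‖f‖_{W}, where Φ_v(p) = (2 Σ_{m=0}^∞ v(pm + p/2)^{-2})^{1/2}. -/

import Mathlib

open MeasureTheory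

/-- Local sup of |f| on the unit interval [l, l+1]. -/
noncomputable def locSup (f : ℝ → ℂ) (l : ℤ) : ℝ :=
  ⨆ x ∈ Set.Icc (0:ℝ) 1, ‖f (x + (l : ℝ))‖

/-- Cauchy–Schwarz for infinite sums of nonnegative reals. -/
lemma aux_tsum_cs {ι : Type*} (a b : ι → ℝ) (ha0 : ∀ i, 0 ≤ a i) (hb0 : ∀ i, 0 ≤ b i)
    (ha : Summable fun i => a i ^ 2) (hb : Summable fun i => b i ^ 2) :
    (∑' i, a i * b i) ≤ Real.sqrt (∑' i, a i ^ 2) * Real.sqrt (∑' i, b i ^ 2) := by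
  have hab : Summable fun i => a i * b i := by
    refine Summable.of_nonneg_of_le (fun i => mul_nonneg (ha0 i) (hb0 i))
      (fun i => ?_) ((ha.add hb).div_const 2)
    have := sq_nonneg (a i - b i)
    have h2 := sq_nonneg (a i + b i)
    nlinarith
  refine Summable.tsum_le_of_sum_le hab fun s => ?_
  have h1 := Finset.sum_mul_sq_le_sq_mul_sq s a b
  have h2 : ∑ i ∈ s, a i ^ 2 ≤ ∑' i, a i ^ 2 := Summable.sum_le_tsum s (fun i _ => sq_nonneg _) ha
  have h3 : ∑ i ∈ s, b i ^ 2 ≤ ∑' i, b i ^ 2 := Summable.sum_le_tsum s (fun i _ => sq_nonneg _) hb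
  have hs0 : (0:ℝ) ≤ ∑ i ∈ s, a i * b i :=
    Finset.sum_nonneg fun i _ => mul_nonneg (ha0 i) (hb0 i)
  calc ∑ i ∈ s, a i * b i = Real.sqrt ((∑ i ∈ s, a i * b i) ^ 2) := (Real.sqrt_sq hs0).symm
    _ ≤ Real.sqrt ((∑' i, a i ^ 2) * (∑' i, b i ^ 2)) := by
        refine Real.sqrt_le_sqrt (h1.trans ?_)
        exact mul_le_mul h2 h3 (Finset.sum_nonneg fun i _ => sq_nonneg _)
          (tsum_nonneg fun i => sq_nonneg _)
    _ = Real.sqrt (∑' i, a i ^ 2) * Real.sqrt (∑' i, b i ^ 2) :=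
        Real.sqrt_mul (tsum_nonneg fun i => sq_nonneg _) _

/-- For a weight v that is even, nondecreasing, submultiplicative, with
Σ_l v(l)^{-2} < ∞, and a continuous f with finite amalgam norm
‖f‖_W = (Σ_l sup_{x∈[0,1]}|f(x+l)|² v(l)²)^{1/2}, one has, for p ≥ 1,
‖f − 𝒫_p f‖_{L²(−p/2,p/2)} ≤ v(1)·Φ_v(p)·‖f‖_W with
Φ_v(p) = (2 Σ_{m=0}^∞ v(pm+p/2)^{-2})^{1/2}. -/
theorem periodization_L2_bound (v : ℝ → ℝ) (f : ℝ → ℂ)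
    (hpos : ∀ x, 0 < v x)
    (heven : ∀ x, v (-x) = v x)
    (hmono : ∀ x y, |x| ≤ |y| → v x ≤ v y)
    (hsub : ∀ x y, v (x + y) ≤ v x * v y)
    (hvsum : Summable fun l : ℤ => (v (l : ℝ) ^ 2)⁻¹)
    (hf : Continuous f)
    (hW : Summable fun l : ℤ => locSup f l ^ 2 * v (l : ℝ) ^ 2)
    (p : ℝ) (hp : 1 ≤ p) :
    Real.sqrt (∫ x in Set.Icc (-(p/2)) (p/2),
        ‖∑' l : {l : ℤ // l ≠ 0}, f (x + p * ((l : ℤ) : ℝ))‖ ^ 2) ≤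
      v 1 * Real.sqrt (2 * ∑' m : ℕ, (v (p * (m : ℝ) + p/2) ^ 2)⁻¹) *
        Real.sqrt (∑' l : ℤ, locSup f l ^ 2 * v (l : ℝ) ^ 2) := by
  have hp0 : (0:ℝ) < p := lt_of_lt_of_le one_pos hp
  have hv1 : 0 < v 1 := hpos 1
  -- measurability of v
  have vmeas : Measurable v := by
    have hm : Monotone fun t : ℝ => v (max t 0) := by
      intro s t hst
      exact hmono _ _ (by
        rw [abs_of_nonneg (le_max_right s 0), abs_of_nonneg (le_max_right t 0)]
        exact max_le_max hst le_rfl)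
    have hveq : v = (fun t : ℝ => v (max t 0)) ∘ abs := by
      funext x
      simp only [Function.comp_apply, max_eq_left (abs_nonneg x)]
      rcases le_or_gt 0 x with h | h
      · rw [abs_of_nonneg h]
      · rw [abs_of_neg h, heven]
    rw [hveq]
    exact hm.measurable.comp measurable_abs
  -- locSup facts
  have hloc_bound : ∀ (k : ℤ) (t : ℝ), t ∈ Set.Icc (0:ℝ) 1 →
      ‖f (t + k)‖ ≤ locSup f k := by
    intro k t ht
    obtain ⟨M, hM⟩ : BddAbove ((fun x : ℝ => ‖f (x + (k:ℝ))‖) '' Set.Icc 0 1) :=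
      (isCompact_Icc.image_of_continuousOn
        (((continuous_norm.comp hf).comp
          (continuous_add_right ((k:ℝ)))).continuousOn)).bddAbove
    have hbdd : BddAbove (Set.range fun x : ℝ =>
        ⨆ (_ : x ∈ Set.Icc (0:ℝ) 1), ‖f (x + (k:ℝ))‖) := by
      refine ⟨max M 0, ?_⟩
      rintro _ ⟨x, rfl⟩
      show (⨆ (_ : x ∈ Set.Icc (0:ℝ) 1), ‖f (x + (k:ℝ))‖) ≤ max M 0
      by_cases hx : x ∈ Set.Icc (0:ℝ) 1
      · rw [ciSup_pos hx]
        exact le_max_of_le_left (hM ⟨x, hx, rfl⟩)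
      · rw [ciSup_neg hx, Real.sSup_empty]
        exact le_max_right _ _
    have h2 : ‖f (t + (k:ℝ))‖
        = ⨆ (_ : t ∈ Set.Icc (0:ℝ) 1), ‖f (t + (k:ℝ))‖ :=
        (ciSup_pos (f := fun _ => ‖f (t + (k:ℝ))‖) ht).symm
    show ‖f (t + (k:ℝ))‖
        ≤ ⨆ x ∈ Set.Icc (0:ℝ) 1, ‖f (x + (k:ℝ))‖
    rw [h2]
    exact le_ciSup hbdd t
  have hloc_nonneg : ∀ k : ℤ, 0 ≤ locSup f k := fun k =>
    le_trans (norm_nonneg _) (hloc_bound k 0 ⟨le_rfl, zero_le_one⟩)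
  -- key pointwise estimate on a unit interval
  have hkey : ∀ (k : ℤ) (y : ℝ), y - k ∈ Set.Icc (0:ℝ) 1 →
      ‖f y‖ ^ 2 * v y ^ 2 ≤ v 1 ^ 2 * (locSup f k ^ 2 * v (k:ℝ) ^ 2) := by
    intro k y hy
    have h1 : ‖f y‖ ≤ locSup f k := by
      have := hloc_bound k (y - k) hy
      simpa [sub_add_cancel] using this
    have h2 : v y ≤ v (k:ℝ) * v 1 := by
      have h3 : v y = v ((k:ℝ) + (y - k)) := by ring_nf
      rw [h3]
      refine (hsub _ _).trans ?_
      refine mul_le_mul_of_nonneg_left (hmono _ _ ?_) (hpos _).le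
      rw [abs_of_nonneg hy.1, abs_one]; exact hy.2
    have h4 : ‖f y‖ * v y ≤ locSup f k * (v (k:ℝ) * v 1) :=
      mul_le_mul h1 h2 (hpos _).le (hloc_nonneg k)
    have h5 := pow_le_pow_left₀ (mul_nonneg (norm_nonneg _) (hpos _).le) h4 2
    calc ‖f y‖ ^ 2 * v y ^ 2 = (‖f y‖ * v y) ^ 2 := by ring
      _ ≤ (locSup f k * (v (k:ℝ) * v 1)) ^ 2 := h5
      _ = v 1 ^ 2 * (locSup f k ^ 2 * v (k:ℝ) ^ 2) := by ring
  have hWs : Summable fun k : ℤ => v 1 ^ 2 * (locSup f k ^ 2 * v (k:ℝ) ^ 2) := hW.mul_left _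
  -- floor injectivity
  have hinj : ∀ x : ℝ, Function.Injective fun l : ℤ => ⌊x + p * l⌋ := by
    intro x l l' h
    have h' : ⌊x + p * (l:ℝ)⌋ = ⌊x + p * (l':ℝ)⌋ := h
    by_contra hne
    have hfl : |((x + p * l) - (x + p * l'))| < 1 := by
      have h1 := Int.floor_le (x + p * l)
      have h2 := Int.lt_floor_add_one (x + p * l)
      have h3 := Int.floor_le (x + p * l')
      have h4 := Int.lt_floor_add_one (x + p * l')
      rw [h'] at h1 h2
      rw [abs_lt]; constructor <;> linarith
    have h5 : (1:ℝ) ≤ |((x + p * l) - (x + p * l'))| := by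
      have : (x + p * l) - (x + p * l') = p * ((l:ℝ) - l') := by ring
      rw [this, abs_mul, abs_of_pos hp0]
      have h6 : (1:ℝ) ≤ |(l:ℝ) - l'| := by
        have : ((1:ℤ):ℝ) ≤ |((l - l' : ℤ):ℝ)| := by
          rw [← Int.cast_abs]
          exact_mod_cast Int.one_le_abs (sub_ne_zero.2 hne)
        push_cast at this
        simpa using this
      calc (1:ℝ) = 1 * 1 := by ring
        _ ≤ p * |(l:ℝ) - l'| := mul_le_mul hp h6 zero_le_one hp0.le
    linarith
  -- pointwise summability of the weighted squares
  have ha2sum : ∀ x : ℝ, Summable fun l : {l : ℤ // l ≠ 0} =>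
      ‖f (x + p * ((l:ℤ):ℝ))‖ ^ 2 * v (x + p * ((l:ℤ):ℝ)) ^ 2 := by
    intro x
    refine Summable.of_nonneg_of_le
      (fun l => mul_nonneg (sq_nonneg _) (sq_nonneg _))
      (fun l => ?_)
      (hWs.comp_injective ((hinj x).comp Subtype.val_injective))
    simp only [Function.comp_apply]
    exact hkey _ _ ⟨sub_nonneg.2 (Int.floor_le _), by
      have := Int.lt_floor_add_one (x + p * ((l:ℤ):ℝ)); linarith⟩
  -- summability of locSup
  have hlocsum : Summable fun k : ℤ => locSup f k := by
    refine Summable.of_nonneg_of_le hloc_nonneg (fun k => ?_) ((hW.add hvsum).div_const 2)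
    have h1 : locSup f k = (locSup f k * v (k:ℝ)) * (v (k:ℝ))⁻¹ :=
      (mul_inv_cancel_right₀ (hpos (k:ℝ)).ne' _).symm
    have h2 := sq_nonneg (locSup f k * v (k:ℝ) - (v (k:ℝ))⁻¹)
    have h3 : (v (k:ℝ))⁻¹ ^ 2 = (v (k:ℝ) ^ 2)⁻¹ := by rw [inv_pow]
    nlinarith [hpos (k:ℝ), (hpos (k:ℝ)).le, inv_nonneg.2 (hpos (k:ℝ)).le]
  -- summability of f along the shifted lattice
  have hfabs_sum : ∀ x : ℝ, Summable fun l : {l : ℤ // l ≠ 0} =>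
      ‖f (x + p * ((l:ℤ):ℝ))‖ := by
    intro x
    refine Summable.of_nonneg_of_le (fun l => norm_nonneg _) (fun l => ?_)
      ((hlocsum.comp_injective ((hinj x).comp Subtype.val_injective)))
    simp only [Function.comp_apply]
    have h := hloc_bound ⌊x + p * ((l:ℤ):ℝ)⌋ (x + p * ((l:ℤ):ℝ) - ⌊x + p * ((l:ℤ):ℝ)⌋)
      ⟨sub_nonneg.2 (Int.floor_le _), by
        have := Int.lt_floor_add_one (x + p * ((l:ℤ):ℝ)); linarith⟩
    simpa [sub_add_cancel] using h
  -- the tail weight sequence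
  set g : ℕ → ℝ := fun m => (v (p * (m:ℝ) + p/2) ^ 2)⁻¹ with hg_def
  have hg0 : ∀ m, 0 ≤ g m := fun m => inv_nonneg.2 (sq_nonneg _)
  have hgsum : Summable g := by
    have hnat : Summable fun m : ℕ => (v ((m:ℤ):ℝ) ^ 2)⁻¹ :=
      hvsum.comp_injective (fun a b h => by exact_mod_cast h)
    refine Summable.of_nonneg_of_le hg0 (fun m => ?_) (by push_cast at hnat ⊢; exact hnat)
    refine inv_anti₀ (pow_pos (hpos _) 2) ?_
    refine pow_le_pow_left₀ (hpos _).le (hmono _ _ ?_) 2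
    have h1 : (0:ℝ) ≤ (m:ℝ) := Nat.cast_nonneg m
    have h2 : (m:ℝ) ≤ p * (m:ℝ) + p/2 := by nlinarith
    rw [abs_of_nonneg h1, abs_of_nonneg (h1.trans h2)]
    exact h2
  set Φ2 : ℝ := 2 * ∑' m : ℕ, g m with hΦ2_def
  have hΦ2_0 : 0 ≤ Φ2 := mul_nonneg (by norm_num) (tsum_nonneg hg0)
  set c : ℤ → ℝ := fun l => if l = 0 then 0 else g (l.natAbs - 1) with hc_def
  have hc1 : (fun n : ℕ => c ((n:ℤ) + 1)) = g := by
    funext n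
    have h1 : ((n:ℤ) + 1) ≠ 0 := by omega
    have h2 : ((n:ℤ) + 1).natAbs = n + 1 := by omega
    simp [hc_def, h1, h2]
  have hc2 : (fun n : ℕ => c (-((n:ℤ) + 1))) = g := by
    funext n
    have h1 : (-((n:ℤ) + 1)) ≠ 0 := by omega
    have h2 : (-((n:ℤ) + 1)).natAbs = n + 1 := by omega
    show (if -((n:ℤ) + 1) = 0 then 0 else g ((-((n:ℤ) + 1)).natAbs - 1)) = g n
    rw [if_neg h1, h2, Nat.add_sub_cancel]
  have hcsum : Summable c :=
    Summable.of_add_one_of_neg_add_one (by rw [show (fun n : ℕ => c (n + 1)) = g from hc1]; exact hgsum)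
      (by rw [show (fun n : ℕ => c (-(n + 1))) = g from hc2]; exact hgsum)
  have hctsum : ∑' l : ℤ, c l = Φ2 := by
    rw [tsum_of_add_one_of_neg_add_one
      (by rw [show (fun n : ℕ => c (n + 1)) = g from hc1]; exact hgsum)
      (by rw [show (fun n : ℕ => c (-(n + 1))) = g from hc2]; exact hgsum)]
    rw [show (fun n : ℕ => c (n + 1)) = g from hc1, show (fun n : ℕ => c (-(n + 1))) = g from hc2]
    simp [hc_def, hΦ2_def]; ring
  -- bound on inverse weights along the lattice
  have hb2 : ∀ x : ℝ, |x| ≤ p/2 → ∀ l : {l : ℤ // l ≠ 0},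
      (v (x + p * ((l:ℤ):ℝ)) ^ 2)⁻¹ ≤ c (l:ℤ) := by
    intro x hx l
    obtain ⟨l, hl⟩ := l
    have hm1 : 1 ≤ l.natAbs := Int.natAbs_pos.2 hl
    have hcast : ((l.natAbs - 1 : ℕ) : ℝ) = (l.natAbs : ℝ) - 1 := by
      push_cast [Nat.cast_sub hm1]; ring
    have hcl : c l = (v (p * ((l.natAbs : ℝ) - 1) + p/2) ^ 2)⁻¹ := by
      simp only [hc_def, if_neg hl, hg_def, hcast]
    rw [hcl]
    have habs : |((l:ℝ))| = (l.natAbs : ℝ) := by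
      rw [← Int.cast_abs, Int.abs_eq_natAbs, Int.cast_natCast]
    have hmabs : (1:ℝ) ≤ (l.natAbs : ℝ) := by exact_mod_cast hm1
    have htri : p * (l.natAbs : ℝ) - |x| ≤ |x + p * (l:ℝ)| := by
      have h1 : |p * (l:ℝ)| ≤ |x + p * (l:ℝ)| + |x| := by
        have := abs_add_le (x + p * (l:ℝ)) (-x)
        simpa [abs_neg] using this
      rw [abs_mul, abs_of_pos hp0, habs] at h1
      linarith
    have harg : |p * ((l.natAbs : ℝ) - 1) + p/2| ≤ |x + p * (l:ℝ)| := by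
      have h0 : 0 ≤ p * ((l.natAbs : ℝ) - 1) + p/2 := by nlinarith
      rw [abs_of_nonneg h0]
      nlinarith
    refine inv_anti₀ (pow_pos (hpos _) 2) ?_
    exact pow_le_pow_left₀ (hpos _).le (hmono _ _ harg) 2
  have hb2sum : ∀ x : ℝ, |x| ≤ p/2 → Summable fun l : {l : ℤ // l ≠ 0} =>
      (v (x + p * ((l:ℤ):ℝ)) ^ 2)⁻¹ := by
    intro x hx
    exact Summable.of_nonneg_of_le (fun l => inv_nonneg.2 (sq_nonneg _))
      (hb2 x hx) (hcsum.comp_injective Subtype.val_injective)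
  have hb2tsum : ∀ x : ℝ, |x| ≤ p/2 →
      (∑' l : {l : ℤ // l ≠ 0}, (v (x + p * ((l:ℤ):ℝ)) ^ 2)⁻¹) ≤ Φ2 := by
    intro x hx
    have h1 : (∑' l : {l : ℤ // l ≠ 0}, (v (x + p * ((l:ℤ):ℝ)) ^ 2)⁻¹)
        ≤ ∑' l : {l : ℤ // l ≠ 0}, c (l:ℤ) :=
      Summable.tsum_le_tsum (hb2 x hx) (hb2sum x hx) (hcsum.comp_injective Subtype.val_injective)
    have h2 : (∑' l : {l : ℤ // l ≠ 0}, c (l:ℤ)) = ∑' l : ℤ, c l := by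
      refine tsum_subtype_eq_of_support_subset (s := {l : ℤ | l ≠ 0}) ?_
      intro l hl
      simp only [Function.mem_support, hc_def] at hl
      by_contra h
      simp only [Set.mem_setOf_eq, not_not] at h
      exact hl (by simp [h])
    rw [h2, hctsum] at h1
    exact h1
  -- the real-valued quadratic sum and its ENNReal counterpart
  set A : ℝ → ℝ := fun x => ∑' l : {l : ℤ // l ≠ 0},
      ‖f (x + p * ((l:ℤ):ℝ))‖ ^ 2 * v (x + p * ((l:ℤ):ℝ)) ^ 2 with hA_def
  have hA0 : ∀ x, 0 ≤ A x := fun x =>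
    tsum_nonneg fun l => mul_nonneg (sq_nonneg _) (sq_nonneg _)
  set Φ : ℝ → ENNReal := fun y => ENNReal.ofReal (‖f y‖ ^ 2 * v y ^ 2) with hΦ_def
  have hΦmeas : Measurable Φ := by
    apply Measurable.ennreal_ofReal
    exact ((continuous_norm.comp hf).measurable.pow_const 2).mul (vmeas.pow_const 2)
  set H : ℝ → ENNReal := fun x => ∑' l : {l : ℤ // l ≠ 0}, Φ (x + p * ((l:ℤ):ℝ)) with hH_def
  have hHmeas : Measurable H := by
    apply Measurable.ennreal_tsum
    intro l
    exact hΦmeas.comp (measurable_add_const _)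
  have hAH : ∀ x, A x = (H x).toReal := by
    intro x
    have h1 : H x = ENNReal.ofReal (A x) := by
      rw [hH_def, hA_def]
      exact (ENNReal.ofReal_tsum_of_nonneg
        (fun l => mul_nonneg (sq_nonneg _) (sq_nonneg _)) (ha2sum x)).symm
    rw [h1, ENNReal.toReal_ofReal (hA0 x)]
  -- pointwise Cauchy-Schwarz bound
  have hpt : ∀ x ∈ Set.Icc (-(p/2)) (p/2),
      ‖∑' l : {l : ℤ // l ≠ 0}, f (x + p * ((l:ℤ):ℝ))‖ ^ 2 ≤ Φ2 * A x := by
    intro x hx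
    have hxabs : |x| ≤ p/2 := abs_le.2 ⟨hx.1, hx.2⟩
    have h1 : ‖∑' l : {l : ℤ // l ≠ 0}, f (x + p * ((l:ℤ):ℝ))‖
        ≤ ∑' l : {l : ℤ // l ≠ 0}, ‖f (x + p * ((l:ℤ):ℝ))‖ := by
      have := norm_tsum_le_tsum_norm (f := fun l : {l : ℤ // l ≠ 0} => f (x + p * ((l:ℤ):ℝ)))
        (by simpa using hfabs_sum x)
      simpa using this
    set a : {l : ℤ // l ≠ 0} → ℝ := fun l =>
      ‖f (x + p * ((l:ℤ):ℝ))‖ * v (x + p * ((l:ℤ):ℝ)) with ha_def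
    set b : {l : ℤ // l ≠ 0} → ℝ := fun l => (v (x + p * ((l:ℤ):ℝ)))⁻¹ with hb_def
    have hab : ∀ l : {l : ℤ // l ≠ 0}, ‖f (x + p * ((l:ℤ):ℝ))‖ = a l * b l := by
      intro l
      rw [ha_def, hb_def]
      rw [mul_inv_cancel_right₀ (hpos _).ne']
    have ha2 : Summable fun l => a l ^ 2 := by
      have : (fun l : {l : ℤ // l ≠ 0} => a l ^ 2) = fun l : {l : ℤ // l ≠ 0} =>
          ‖f (x + p * ((l:ℤ):ℝ))‖ ^ 2 * v (x + p * ((l:ℤ):ℝ)) ^ 2 := by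
        funext l; rw [ha_def]; ring
      rw [this]; exact ha2sum x
    have hb2' : Summable fun l => b l ^ 2 := by
      have : (fun l : {l : ℤ // l ≠ 0} => b l ^ 2) = fun l : {l : ℤ // l ≠ 0} =>
          (v (x + p * ((l:ℤ):ℝ)) ^ 2)⁻¹ := by
        funext l; rw [hb_def, inv_pow]
      rw [this]; exact hb2sum x hxabs
    have hcs := aux_tsum_cs a b (fun l => mul_nonneg (norm_nonneg _) (hpos _).le)
      (fun l => inv_nonneg.2 (hpos _).le) ha2 hb2'
    have h2 : (∑' l : {l : ℤ // l ≠ 0}, ‖f (x + p * ((l:ℤ):ℝ))‖)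
        = ∑' l, a l * b l := by
      exact tsum_congr hab
    have ha2eq : (∑' l, a l ^ 2) = A x := by
      rw [hA_def]
      refine tsum_congr fun l => ?_
      rw [ha_def]; ring
    have hb2le : (∑' l, b l ^ 2) ≤ Φ2 := by
      have : (fun l : {l : ℤ // l ≠ 0} => b l ^ 2) = fun l : {l : ℤ // l ≠ 0} =>
          (v (x + p * ((l:ℤ):ℝ)) ^ 2)⁻¹ := by
        funext l; rw [hb_def, inv_pow]
      rw [this]; exact hb2tsum x hxabs
    have h3 : ‖∑' l : {l : ℤ // l ≠ 0}, f (x + p * ((l:ℤ):ℝ))‖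
        ≤ Real.sqrt (A x) * Real.sqrt Φ2 := by
      refine h1.trans ?_
      rw [h2, ← ha2eq]
      refine hcs.trans ?_
      exact mul_le_mul_of_nonneg_left (Real.sqrt_le_sqrt hb2le) (Real.sqrt_nonneg _)
    calc ‖∑' l : {l : ℤ // l ≠ 0}, f (x + p * ((l:ℤ):ℝ))‖ ^ 2
        ≤ (Real.sqrt (A x) * Real.sqrt Φ2) ^ 2 :=
          pow_le_pow_left₀ (norm_nonneg _) h3 2
      _ = A x * Φ2 := by
          rw [mul_pow, Real.sq_sqrt (hA0 x), Real.sq_sqrt hΦ2_0]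
      _ = Φ2 * A x := by ring
  set S : ℝ := ∑' l : ℤ, locSup f l ^ 2 * v (l:ℝ) ^ 2 with hS_def
  have hS0 : 0 ≤ S := tsum_nonneg fun l => mul_nonneg (sq_nonneg _) (sq_nonneg _)
  -- disjointness of the translated intervals
  have hdisj : Pairwise (Function.onFun Disjoint fun l : ℤ =>
      Set.Ioc (-(p/2) + p * (l:ℝ)) (p/2 + p * (l:ℝ))) := by
    intro i j hne
    rw [Function.onFun, Set.Ioc_disjoint_Ioc]
    rcases hne.lt_or_gt with h | h
    · have hij : (i:ℝ) + 1 ≤ (j:ℝ) := by exact_mod_cast h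
      refine (min_le_left _ _).trans (le_trans ?_ (le_max_right _ _))
      nlinarith
    · have hij : (j:ℝ) + 1 ≤ (i:ℝ) := by exact_mod_cast h
      refine (min_le_right _ _).trans (le_trans ?_ (le_max_left _ _))
      nlinarith
  have hdisj2 : Pairwise (Function.onFun Disjoint fun k : ℤ =>
      Set.Ioc (k:ℝ) ((k:ℝ)+1)) := by
    intro i j hne
    rw [Function.onFun, Set.Ioc_disjoint_Ioc]
    rcases hne.lt_or_gt with h | h
    · have hij : (i:ℝ) + 1 ≤ (j:ℝ) := by exact_mod_cast h
      exact (min_le_left _ _).trans (le_trans hij (le_max_right _ _))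
    · have hij : (j:ℝ) + 1 ≤ (i:ℝ) := by exact_mod_cast h
      exact (min_le_right _ _).trans (le_trans hij (le_max_left _ _))
  have huniv : (⋃ k : ℤ, Set.Ioc (k:ℝ) ((k:ℝ)+1)) = Set.univ := by
    ext y
    simp only [Set.mem_iUnion, Set.mem_Ioc, Set.mem_univ, iff_true]
    refine ⟨⌈y⌉ - 1, ?_, ?_⟩
    · push_cast
      have := Int.ceil_lt_add_one y
      linarith
    · push_cast
      have := Int.le_ceil y
      linarith
  -- global weighted L² bound
  have hΦint : ∫⁻ y, Φ y ≤ ENNReal.ofReal (v 1 ^ 2 * S) := by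
    calc ∫⁻ y, Φ y = ∫⁻ y in Set.univ, Φ y := (setLIntegral_univ _).symm
      _ = ∫⁻ y in ⋃ k : ℤ, Set.Ioc (k:ℝ) ((k:ℝ)+1), Φ y := by rw [huniv]
      _ = ∑' k : ℤ, ∫⁻ y in Set.Ioc (k:ℝ) ((k:ℝ)+1), Φ y :=
          lintegral_iUnion (fun k => measurableSet_Ioc) hdisj2 _
      _ ≤ ∑' k : ℤ, ENNReal.ofReal (v 1 ^ 2 * (locSup f k ^ 2 * v (k:ℝ) ^ 2)) := by
          refine ENNReal.tsum_le_tsum fun k => ?_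
          have hb : ∀ y ∈ Set.Ioc (k:ℝ) ((k:ℝ)+1),
              Φ y ≤ ENNReal.ofReal (v 1 ^ 2 * (locSup f k ^ 2 * v (k:ℝ) ^ 2)) := by
            intro y hy
            exact ENNReal.ofReal_le_ofReal
              (hkey k y ⟨by linarith [hy.1], by linarith [hy.2]⟩)
          calc ∫⁻ y in Set.Ioc (k:ℝ) ((k:ℝ)+1), Φ y
              ≤ ∫⁻ _ in Set.Ioc (k:ℝ) ((k:ℝ)+1),
                  ENNReal.ofReal (v 1 ^ 2 * (locSup f k ^ 2 * v (k:ℝ) ^ 2)) :=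
                setLIntegral_mono measurable_const hb
            _ = ENNReal.ofReal (v 1 ^ 2 * (locSup f k ^ 2 * v (k:ℝ) ^ 2)) *
                  volume (Set.Ioc (k:ℝ) ((k:ℝ)+1)) := setLIntegral_const _ _
            _ = ENNReal.ofReal (v 1 ^ 2 * (locSup f k ^ 2 * v (k:ℝ) ^ 2)) := by
                rw [Real.volume_Ioc]
                simp
      _ = ENNReal.ofReal (∑' k : ℤ, v 1 ^ 2 * (locSup f k ^ 2 * v (k:ℝ) ^ 2)) :=
          (ENNReal.ofReal_tsum_of_nonneg
            (fun k => by positivity) hWs).symm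
      _ = ENNReal.ofReal (v 1 ^ 2 * S) := by rw [tsum_mul_left]
  -- the main lintegral estimate
  have hLkey : ∫⁻ x in Set.Icc (-(p/2)) (p/2), H x ≤ ENNReal.ofReal (v 1 ^ 2 * S) := by
    have hres : volume.restrict (Set.Icc (-(p/2)) (p/2)) =
        volume.restrict (Set.Ioc (-(p/2)) (p/2)) :=
      (Measure.restrict_congr_set Ioc_ae_eq_Icc).symm
    rw [hres]
    calc ∫⁻ x in Set.Ioc (-(p/2)) (p/2), H x
        = ∑' l : {l : ℤ // l ≠ 0}, ∫⁻ x in Set.Ioc (-(p/2)) (p/2), Φ (x + p * ((l:ℤ):ℝ)) := by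
          rw [hH_def]
          exact lintegral_tsum fun l => (hΦmeas.comp (measurable_add_const _)).aemeasurable
      _ = ∑' l : {l : ℤ // l ≠ 0},
            ∫⁻ y in Set.Ioc (-(p/2) + p * ((l:ℤ):ℝ)) (p/2 + p * ((l:ℤ):ℝ)), Φ y := by
          refine tsum_congr fun l => ?_
          have h1 := (measurePreserving_add_right volume (p * ((l:ℤ):ℝ))).setLIntegral_comp_emb
            (measurableEmbedding_addRight _) Φ (Set.Ioc (-(p/2)) (p/2))
          rw [h1, Set.image_add_const_Ioc]
      _ ≤ ∑' l : ℤ, ∫⁻ y in Set.Ioc (-(p/2) + p * (l:ℝ)) (p/2 + p * (l:ℝ)), Φ y :=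
          ENNReal.tsum_comp_le_tsum_of_injective Subtype.val_injective _
      _ = ∫⁻ y in ⋃ l : ℤ, Set.Ioc (-(p/2) + p * (l:ℝ)) (p/2 + p * (l:ℝ)), Φ y :=
          (lintegral_iUnion (fun l => measurableSet_Ioc) hdisj _).symm
      _ ≤ ∫⁻ y, Φ y := by
          exact lintegral_mono' Measure.restrict_le_self le_rfl
      _ ≤ ENNReal.ofReal (v 1 ^ 2 * S) := hΦint
  have hHfin : ∫⁻ x in Set.Icc (-(p/2)) (p/2), H x ≠ ⊤ :=
    ne_top_of_le_ne_top ENNReal.ofReal_ne_top hLkey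
  have hAint : Integrable A (volume.restrict (Set.Icc (-(p/2)) (p/2))) := by
    have h1 := integrable_toReal_of_lintegral_ne_top
      (hHmeas.aemeasurable (μ := volume.restrict (Set.Icc (-(p/2)) (p/2)))) hHfin
    exact h1.congr (ae_of_all _ fun x => (hAH x).symm)
  have hGint : Integrable (fun x => Φ2 * A x)
      (volume.restrict (Set.Icc (-(p/2)) (p/2))) := hAint.const_mul _
  have hIbound : (∫ x in Set.Icc (-(p/2)) (p/2),
      ‖∑' l : {l : ℤ // l ≠ 0}, f (x + p * ((l:ℤ):ℝ))‖ ^ 2)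
      ≤ Φ2 * (v 1 ^ 2 * S) := by
    have h1 : (∫ x in Set.Icc (-(p/2)) (p/2),
        ‖∑' l : {l : ℤ // l ≠ 0}, f (x + p * ((l:ℤ):ℝ))‖ ^ 2)
        ≤ ∫ x in Set.Icc (-(p/2)) (p/2), Φ2 * A x := by
      refine integral_mono_of_nonneg (ae_of_all _ fun x => sq_nonneg _) hGint ?_
      exact (ae_restrict_iff' measurableSet_Icc).2 (ae_of_all _ hpt)
    have h2 : (∫ x in Set.Icc (-(p/2)) (p/2), Φ2 * A x)
        = Φ2 * ∫ x in Set.Icc (-(p/2)) (p/2), A x := integral_const_mul _ _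
    have h3 : (∫ x in Set.Icc (-(p/2)) (p/2), A x) ≤ v 1 ^ 2 * S := by
      have h4 : (∫ x in Set.Icc (-(p/2)) (p/2), A x)
          = (∫⁻ x in Set.Icc (-(p/2)) (p/2), H x).toReal := by
        rw [show A = fun x => (H x).toReal from funext hAH]
        exact integral_toReal (hHmeas.aemeasurable)
          (ae_lt_top' (hHmeas.aemeasurable) hHfin)
      rw [h4]
      exact ENNReal.toReal_le_of_le_ofReal (by positivity) hLkey
    calc (∫ x in Set.Icc (-(p/2)) (p/2),
        ‖∑' l : {l : ℤ // l ≠ 0}, f (x + p * ((l:ℤ):ℝ))‖ ^ 2)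
        ≤ Φ2 * ∫ x in Set.Icc (-(p/2)) (p/2), A x := h2 ▸ h1
      _ ≤ Φ2 * (v 1 ^ 2 * S) := mul_le_mul_of_nonneg_left h3 hΦ2_0
  have hfin := Real.sqrt_le_sqrt hIbound
  refine hfin.trans (le_of_eq ?_)
  rw [Real.sqrt_mul hΦ2_0, Real.sqrt_mul (sq_nonneg (v 1)), Real.sqrt_sq hv1.le]
  ring
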